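/- arXiv:2506.04899 — 6 statements merged into one kernel-verified Lean document; each statement's English description precedes it below -/
import Mathlib

section
/- Let A, B be positively graded Noetherian rings over a common field k = A_0 = B_0, R = A ×_k B the fiber product along the canonical projections. For any proper graded ideal I ⊊ A, the contraction of its extension satisfies IR ∩ A = I, where A is identified with its image under ι_1 : A → R, a ↦ (a, f(a)); likewise JR ∩ B = J for any proper graded ideal J ⊊ B. -/
noncomputable section

/-- The fiber product `A ×ₖ B = {(a,b) : f a = g b}`, as a subalgebra of `A × B`. -/
def fiberProd {k A B : Type*} [CommSemiring k] [Semiring A] [Semiring B]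
    [Algebra k A] [Algebra k B] (f : A →ₐ[k] k) (g : B →ₐ[k] k) : Subalgebra k (A × B) :=
  AlgHom.equalizer (f.comp (AlgHom.fst k A B)) (g.comp (AlgHom.snd k A B))

/-- The canonical map `ι₁ : A → A ×ₖ B`, `a ↦ (a, f a)`. -/
def fiberProdInl {k A B : Type*} [CommSemiring k] [Semiring A] [Semiring B]
    [Algebra k A] [Algebra k B] (f : A →ₐ[k] k) (g : B →ₐ[k] k) :
    A →ₐ[k] fiberProd f g :=
  AlgHom.codRestrict ((AlgHom.id k A).prod ((Algebra.ofId k B).comp f)) (fiberProd f g)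
    (fun a => by simp [fiberProd, AlgHom.mem_equalizer, Algebra.ofId_apply, AlgHom.commutes])

/-- The canonical map `ι₂ : B → A ×ₖ B`, `b ↦ (g b, b)`. -/
def fiberProdInr {k A B : Type*} [CommSemiring k] [Semiring A] [Semiring B]
    [Algebra k A] [Algebra k B] (f : A →ₐ[k] k) (g : B →ₐ[k] k) :
    B →ₐ[k] fiberProd f g :=
  AlgHom.codRestrict (((Algebra.ofId k A).comp g).prod (AlgHom.id k B)) (fiberProd f g)
    (fun b => by simp [fiberProd, AlgHom.mem_equalizer, Algebra.ofId_apply, AlgHom.commutes])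


theorem comap_map_of_retract {R S : Type*} [CommRing R] [CommRing S]
    (f : R →+* S) (p : S →+* R) (hp : ∀ x, p (f x) = x) (I : Ideal R) :
    Ideal.comap f (Ideal.map f I) = I := by
  refine le_antisymm (fun x hx => ?_) (Ideal.le_comap_map)
  have h1 : f x ∈ Ideal.map f I := hx
  have h2 : p (f x) ∈ Ideal.map p (Ideal.map f I) := Ideal.mem_map_of_mem p h1
  rw [hp, Ideal.map_map] at h2
  have : p.comp f = RingHom.id R := by ext y; simp [hp]
  rwa [this, Ideal.map_id] at h2

/-- Let `A`, `B` be positively graded Noetherian rings over a common field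
`k = A₀ = B₀`, `R = A ×ₖ B` the fiber product along the canonical projections. For any proper
graded ideal `I ⊊ A` the contraction of its extension satisfies `IR ∩ A = I` (identifying `A`
with its image under `ι₁ : a ↦ (a, f a)`); likewise `JR ∩ B = J` for any proper graded ideal
`J ⊊ B`. -/
theorem fiberProd_comap_map_eq {k A B : Type*} [Field k] [CommRing A] [CommRing B]
    [Algebra k A] [Algebra k B] [IsNoetherianRing A] [IsNoetherianRing B]
    (𝒜 : ℕ → Submodule k A) (ℬ : ℕ → Submodule k B)
    [GradedAlgebra 𝒜] [GradedAlgebra ℬ]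
    (h𝒜 : 𝒜 0 ≤ LinearMap.range (Algebra.linearMap k A))
    (hℬ : ℬ 0 ≤ LinearMap.range (Algebra.linearMap k B))
    (f : A →ₐ[k] k) (g : B →ₐ[k] k)
    (hf : ∀ i, 0 < i → ∀ a ∈ 𝒜 i, f a = 0)
    (hg : ∀ i, 0 < i → ∀ b ∈ ℬ i, g b = 0)
    (I : Ideal A) (hI : I ≠ ⊤) (hIhom : I.IsHomogeneous 𝒜)
    (J : Ideal B) (hJ : J ≠ ⊤) (hJhom : J.IsHomogeneous ℬ) :
    Ideal.comap (fiberProdInl f g) (Ideal.map (fiberProdInl f g) I) = I ∧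
      Ideal.comap (fiberProdInr f g) (Ideal.map (fiberProdInr f g) J) = J := by
  constructor
  · exact comap_map_of_retract (fiberProdInl f g).toRingHom
      (((AlgHom.fst k A B).comp (fiberProd f g).val)).toRingHom (fun x => rfl) I
  · exact comap_map_of_retract (fiberProdInr f g).toRingHom
      (((AlgHom.snd k A B).comp (fiberProd f g).val)).toRingHom (fun x => rfl) J
end
end

section
/- With R = A ×_k B the fiber product of positively graded Noetherian k-algebras A and B over the field k, for any proper graded ideal I ⊊ A, the radical of the extended ideal satisfies √(IR) = √I·R ⊕ √(0)_B·R, where √I is the radical of I in A and √(0)_B is the nilradical of B. -/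
set_option synthInstance.maxHeartbeats 800000
set_option maxHeartbeats 1600000


noncomputable section

section Aux
variable {k A B : Type*} [Field k] [CommRing A] [CommRing B]
    [Algebra k A] [Algebra k B] (f : A →ₐ[k] k) (g : B →ₐ[k] k)

/-- A proper homogeneous ideal is contained in the kernel of `f`. -/
lemma hom_le_ker (𝒜 : ℕ → Submodule k A) [GradedAlgebra 𝒜]
    (h𝒜 : 𝒜 0 ≤ LinearMap.range (Algebra.linearMap k A))
    (hf : ∀ i, 0 < i → ∀ a ∈ 𝒜 i, f a = 0)
    (J : Ideal A) (hJ : J ≠ ⊤) (hhom : J.IsHomogeneous 𝒜) :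
    ∀ x ∈ J, f x = 0 := by
  intro x hx
  classical
  have hsum := DirectSum.sum_support_decompose 𝒜 x
  have hfx : f x = ∑ i ∈ DFinsupp.support (DirectSum.decompose 𝒜 x),
      f ((DirectSum.decompose 𝒜 x i : A)) := by
    conv_lhs => rw [← hsum]
    rw [map_sum]
  rw [hfx]
  apply Finset.sum_eq_zero
  intro i _
  rcases Nat.eq_zero_or_pos i with hi | hi
  · subst hi
    have h0 : (DirectSum.decompose 𝒜 x 0 : A) ∈ J := hhom 0 hx
    obtain ⟨c, hc⟩ := h𝒜 (DirectSum.decompose 𝒜 x 0).2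
    simp only [Algebra.linearMap_apply] at hc
    have hc0 : c = 0 := by
      by_contra hne
      apply hJ
      rw [Ideal.eq_top_iff_one]
      have : (algebraMap k A) c ∈ J := by rw [hc]; exact h0
      have h1 : (algebraMap k A) c⁻¹ * (algebraMap k A) c ∈ J := Ideal.mul_mem_left _ _ this
      rwa [← map_mul, inv_mul_cancel₀ hne, map_one] at h1
    rw [← hc, hc0, map_zero, map_zero]
  · exact hf i hi _ (DirectSum.decompose 𝒜 x i).2

/-- Membership characterization of the extension of `J ⊆ ker f` along `ι₁`. -/
lemma mem_map_inl_iff (J : Ideal A) (hJf : ∀ x ∈ J, f x = 0) (r : fiberProd f g) :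
    r ∈ J.map (fiberProdInl f g) ↔ (r : A × B).1 ∈ J ∧ (r : A × B).2 = 0 := by
  constructor
  · intro hr
    have hle : J.map (fiberProdInl f g) ≤
        Ideal.comap ((fiberProd f g).val) (J.prod ⊥) := by
      rw [Ideal.map_le_iff_le_comap]
      intro x hx
      simp only [Ideal.mem_comap, Ideal.mem_comap]
      have : ((fiberProdInl f g x : fiberProd f g) : A × B)
          = (x, algebraMap k B (f x)) := rfl
      show ((fiberProdInl f g x : fiberProd f g) : A × B) ∈ J.prod ⊥
      rw [this, hJf x hx, map_zero]
      exact Ideal.mem_prod J ⊥ |>.mpr ⟨hx, rfl⟩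
    have := hle hr
    simp only [Ideal.mem_comap] at this
    have h2 : ((r : A × B).1, (r : A × B).2) ∈ J.prod ⊥ := this
    rw [Ideal.mem_prod] at h2
    exact ⟨h2.1, h2.2⟩
  · rintro ⟨h1, h2⟩
    have : r = fiberProdInl f g (r : A × B).1 := by
      apply Subtype.ext
      have : ((fiberProdInl f g (r : A × B).1 : fiberProd f g) : A × B)
          = ((r : A × B).1, algebraMap k B (f (r : A × B).1)) := rfl
      rw [this, hJf _ h1, map_zero]
      exact Prod.ext rfl h2
    rw [this]
    exact Ideal.mem_map_of_mem _ h1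

/-- Membership characterization of the extension of `J ⊆ ker g` along `ι₂`. -/
lemma mem_map_inr_iff (J : Ideal B) (hJg : ∀ x ∈ J, g x = 0) (r : fiberProd f g) :
    r ∈ J.map (fiberProdInr f g) ↔ (r : A × B).2 ∈ J ∧ (r : A × B).1 = 0 := by
  constructor
  · intro hr
    have hle : J.map (fiberProdInr f g) ≤
        Ideal.comap ((fiberProd f g).val) (Ideal.prod ⊥ J) := by
      rw [Ideal.map_le_iff_le_comap]
      intro x hx
      show ((fiberProdInr f g x : fiberProd f g) : A × B) ∈ Ideal.prod ⊥ J
      have : ((fiberProdInr f g x : fiberProd f g) : A × B)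
          = (algebraMap k A (g x), x) := rfl
      rw [this, hJg x hx, map_zero]
      exact Ideal.mem_prod ⊥ J |>.mpr ⟨rfl, hx⟩
    have := hle hr
    simp only [Ideal.mem_comap] at this
    have h2 : ((r : A × B).1, (r : A × B).2) ∈ Ideal.prod ⊥ J := this
    rw [Ideal.mem_prod] at h2
    exact ⟨h2.2, h2.1⟩
  · rintro ⟨h1, h2⟩
    have : r = fiberProdInr f g (r : A × B).2 := by
      apply Subtype.ext
      have : ((fiberProdInr f g (r : A × B).2 : fiberProd f g) : A × B)
          = (algebraMap k A (g (r : A × B).2), (r : A × B).2) := rfl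
      rw [this, hJg _ h1, map_zero]
      exact Prod.ext h2 rfl
    rw [this]
    exact Ideal.mem_map_of_mem _ h1

end Aux

/-- With `R = A ×ₖ B` the fiber product of positively graded Noetherian
`k`-algebras over the field `k`, for any proper graded ideal `I ⊊ A` the radical of the
extended ideal satisfies `√(IR) = √I·R ⊕ √(0)_B·R`, where `√I` is the radical of `I` in `A`
and `√(0)_B` is the nilradical of `B`. -/
theorem fiberProd_radical_map {k A B : Type*} [Field k] [CommRing A] [CommRing B]
    [Algebra k A] [Algebra k B] [IsNoetherianRing A] [IsNoetherianRing B]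
    (𝒜 : ℕ → Submodule k A) (ℬ : ℕ → Submodule k B)
    [GradedAlgebra 𝒜] [GradedAlgebra ℬ]
    (h𝒜 : 𝒜 0 ≤ LinearMap.range (Algebra.linearMap k A))
    (hℬ : ℬ 0 ≤ LinearMap.range (Algebra.linearMap k B))
    (f : A →ₐ[k] k) (g : B →ₐ[k] k)
    (hf : ∀ i, 0 < i → ∀ a ∈ 𝒜 i, f a = 0)
    (hg : ∀ i, 0 < i → ∀ b ∈ ℬ i, g b = 0)
    (I : Ideal A) (hI : I ≠ ⊤) (hIhom : I.IsHomogeneous 𝒜) :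
    (Ideal.map (fiberProdInl f g) I).radical
        = Ideal.map (fiberProdInl f g) I.radical ⊔ Ideal.map (fiberProdInr f g) (nilradical B) ∧
      Ideal.map (fiberProdInl f g) I.radical ⊓ Ideal.map (fiberProdInr f g) (nilradical B) = ⊥ := by
  -- `I ⊆ ker f` and `√I ⊆ ker f`
  have hIker : ∀ x ∈ I, f x = 0 := hom_le_ker f 𝒜 h𝒜 hf I hI hIhom
  have hradtop : I.radical ≠ ⊤ := fun h => hI (Ideal.radical_eq_top.mp h)
  have hradhom : I.radical.IsHomogeneous 𝒜 := hIhom.radical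
  have hradker : ∀ x ∈ I.radical, f x = 0 := hom_le_ker f 𝒜 h𝒜 hf _ hradtop hradhom
  have hnilker : ∀ x ∈ nilradical B, g x = 0 := by
    intro x hx
    obtain ⟨n, hn⟩ := hx
    have : (g x) ^ n = 0 := by rw [← map_pow, hn, map_zero]
    exact (pow_eq_zero_iff'.mp this).1
  constructor
  · apply le_antisymm
    · intro r hr
      obtain ⟨n, hn⟩ := hr
      rw [mem_map_inl_iff f g I hIker] at hn
      have hpow : ((r ^ n : fiberProd f g) : A × B) = (r : A × B) ^ n := by
        push_cast; ring
      rw [hpow] at hn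
      obtain ⟨h1, h2⟩ := hn
      have hr1 : (r : A × B).1 ∈ I.radical := ⟨n, h1⟩
      have hr2 : (r : A × B).2 ∈ nilradical B := ⟨n, h2⟩
      rw [Submodule.mem_sup]
      refine ⟨fiberProdInl f g (r : A × B).1, Ideal.mem_map_of_mem _ hr1,
        fiberProdInr f g (r : A × B).2, Ideal.mem_map_of_mem _ hr2, ?_⟩
      apply Subtype.ext
      show ((r : A × B).1, algebraMap k B (f (r : A × B).1))
          + (algebraMap k A (g (r : A × B).2), (r : A × B).2) = (r : A × B)
      rw [hradker _ hr1, hnilker _ hr2, map_zero, map_zero]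
      exact Prod.ext (by simp) (by simp)
    · apply sup_le
      · rw [Ideal.map_le_iff_le_comap]
        intro x hx
        obtain ⟨n, hn⟩ := hx
        refine ⟨n, ?_⟩
        rw [← map_pow]
        exact Ideal.mem_map_of_mem _ hn
      · rw [Ideal.map_le_iff_le_comap]
        intro x hx
        obtain ⟨n, hn⟩ := hx
        refine ⟨n, ?_⟩
        rw [← map_pow, hn, map_zero]
        exact Ideal.zero_mem _
  · rw [eq_bot_iff]
    intro r hr
    obtain ⟨h1, h2⟩ := hr
    have h1' : r ∈ Ideal.map (fiberProdInl f g) I.radical := h1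
    have h2' : r ∈ Ideal.map (fiberProdInr f g) (nilradical B) := h2
    rw [mem_map_inl_iff f g _ hradker] at h1'
    rw [mem_map_inr_iff f g _ hnilker] at h2'
    have : (r : A × B) = 0 := Prod.ext h2'.2 h1'.2
    exact Subtype.ext this
end
end

section
/- With R = A ×_k B the fiber product of positively graded Noetherian k-algebras over the field k, for proper graded ideals I ⊊ A and J ⊊ B, the radical satisfies √(IR ⊕ JR) = √(IR) ⊕ √(JR) = √I·R ⊕ √J·R. -/
set_option maxHeartbeats 1000000
set_option synthInstance.maxHeartbeats 400000


noncomputable section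

section Aux


variable {k A B : Type*} [Field k] [CommRing A] [CommRing B]
    [Algebra k A] [Algebra k B]

/-- A k-algebra map to k killing positive-degree parts kills any proper homogeneous ideal. -/
lemma key_vanish (𝒜 : ℕ → Submodule k A) [GradedAlgebra 𝒜]
    (h𝒜 : 𝒜 0 ≤ LinearMap.range (Algebra.linearMap k A))
    (f : A →ₐ[k] k) (hf : ∀ i, 0 < i → ∀ a ∈ 𝒜 i, f a = 0)
    (I : Ideal A) (hI : I ≠ ⊤) (hIhom : I.IsHomogeneous 𝒜) :
    ∀ a ∈ I, f a = 0 := by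
  intro a ha
  classical
  have h0 : ∀ i, f ((DirectSum.decompose 𝒜 a i : A)) = 0 := by
    intro i
    rcases Nat.eq_zero_or_pos i with h | h
    · subst h
      have haI : (DirectSum.decompose 𝒜 a 0 : A) ∈ I := hIhom 0 ha
      obtain ⟨c, hc⟩ := h𝒜 (SetLike.coe_mem (DirectSum.decompose 𝒜 a 0))
      simp only [Algebra.linearMap_apply] at hc
      by_contra hne
      have hc0 : c ≠ 0 := by
        intro h0
        apply hne
        rw [← hc, h0, map_zero, map_zero]
      have hu : IsUnit ((DirectSum.decompose 𝒜 a 0 : A)) := by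
        rw [← hc]
        exact (isUnit_iff_ne_zero.mpr hc0).map (algebraMap k A)
      exact hI (I.eq_top_of_isUnit_mem haI hu)
    · exact hf i h _ (SetLike.coe_mem _)
  conv_lhs => rw [← DirectSum.sum_support_decompose 𝒜 a]
  rw [map_sum]
  exact Finset.sum_eq_zero fun i _ => h0 i

variable (f : A →ₐ[k] k) (g : B →ₐ[k] k)

lemma coe_fiberProdInl (a : A) :
    ((fiberProdInl f g a : fiberProd f g) : A × B) = (a, algebraMap k B (f a)) := rfl

lemma coe_fiberProdInr (b : B) :
    ((fiberProdInr f g b : fiberProd f g) : A × B) = (algebraMap k A (g b), b) := rfl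

lemma mem_mapInl (I : Ideal A) (hfI : ∀ a ∈ I, f a = 0) (x : fiberProd f g) :
    x ∈ Ideal.map (fiberProdInl f g) I ↔ (x : A × B).1 ∈ I ∧ (x : A × B).2 = 0 := by
  constructor
  · intro hx
    refine Submodule.span_induction (p := fun (y : fiberProd f g) _ => (y : A × B).1 ∈ I ∧ (y : A × B).2 = 0)
      ?_ ?_ ?_ ?_ hx
    · rintro y ⟨a, ha, rfl⟩
      rw [coe_fiberProdInl]
      exact ⟨ha, by rw [hfI a ha, map_zero]⟩
    · exact ⟨I.zero_mem, rfl⟩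
    · rintro y z _ _ ⟨hy1, hy2⟩ ⟨hz1, hz2⟩
      exact ⟨I.add_mem hy1 hz1, by simp [hy2, hz2]⟩
    · rintro r y _ ⟨hy1, hy2⟩
      rw [smul_eq_mul]
      refine ⟨?_, ?_⟩
      · show (r : A × B).1 * (y : A × B).1 ∈ I
        exact I.mul_mem_left _ hy1
      · show (r : A × B).2 * (y : A × B).2 = 0
        rw [hy2, mul_zero]
  · rintro ⟨h1, h2⟩
    have : x = fiberProdInl f g (x : A × B).1 := by
      apply Subtype.ext
      rw [coe_fiberProdInl, hfI _ h1, map_zero]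
      exact Prod.ext rfl h2
    rw [this]
    exact Ideal.mem_map_of_mem _ h1

lemma mem_mapInr (J : Ideal B) (hgJ : ∀ b ∈ J, g b = 0) (x : fiberProd f g) :
    x ∈ Ideal.map (fiberProdInr f g) J ↔ (x : A × B).2 ∈ J ∧ (x : A × B).1 = 0 := by
  constructor
  · intro hx
    refine Submodule.span_induction (p := fun (y : fiberProd f g) _ => (y : A × B).2 ∈ J ∧ (y : A × B).1 = 0)
      ?_ ?_ ?_ ?_ hx
    · rintro y ⟨b, hb, rfl⟩
      rw [coe_fiberProdInr]
      exact ⟨hb, by rw [hgJ b hb, map_zero]⟩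
    · exact ⟨J.zero_mem, rfl⟩
    · rintro y z _ _ ⟨hy1, hy2⟩ ⟨hz1, hz2⟩
      exact ⟨J.add_mem hy1 hz1, by simp [hy2, hz2]⟩
    · rintro r y _ ⟨hy1, hy2⟩
      rw [smul_eq_mul]
      refine ⟨?_, ?_⟩
      · show (r : A × B).2 * (y : A × B).2 ∈ J
        exact J.mul_mem_left _ hy1
      · show (r : A × B).1 * (y : A × B).1 = 0
        rw [hy2, mul_zero]
  · rintro ⟨h1, h2⟩
    have : x = fiberProdInr f g (x : A × B).2 := by
      apply Subtype.ext
      rw [coe_fiberProdInr, hgJ _ h1, map_zero]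
      exact Prod.ext h2 rfl
    rw [this]
    exact Ideal.mem_map_of_mem _ h1

lemma mem_sup_map (I : Ideal A) (J : Ideal B)
    (hfI : ∀ a ∈ I, f a = 0) (hgJ : ∀ b ∈ J, g b = 0) (x : fiberProd f g) :
    x ∈ Ideal.map (fiberProdInl f g) I ⊔ Ideal.map (fiberProdInr f g) J ↔
      (x : A × B).1 ∈ I ∧ (x : A × B).2 ∈ J := by
  constructor
  · intro hx
    obtain ⟨y, hy, z, hz, rfl⟩ := Submodule.mem_sup.mp hx
    obtain ⟨hy1, hy2⟩ := (mem_mapInl f g I hfI y).mp hy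
    obtain ⟨hz1, hz2⟩ := (mem_mapInr f g J hgJ z).mp hz
    constructor
    · show (y : A × B).1 + (z : A × B).1 ∈ I
      rw [hz2, add_zero]; exact hy1
    · show (y : A × B).2 + (z : A × B).2 ∈ J
      rw [hy2, zero_add]; exact hz1
  · rintro ⟨h1, h2⟩
    have hxy : x = fiberProdInl f g (x : A × B).1 + fiberProdInr f g (x : A × B).2 := by
      apply Subtype.ext
      show (x : A × B) = ((x : A × B).1, algebraMap k B (f (x : A × B).1))
        + (algebraMap k A (g (x : A × B).2), (x : A × B).2)
      rw [hfI _ h1, hgJ _ h2, map_zero, map_zero]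
      exact Prod.ext (by simp) (by simp)
    rw [hxy]
    exact Submodule.add_mem_sup (Ideal.mem_map_of_mem _ h1) (Ideal.mem_map_of_mem _ h2)

end Aux

/-- With `R = A ×ₖ B` the fiber product of positively graded Noetherian
`k`-algebras over the field `k`, for proper graded ideals `I ⊊ A` and `J ⊊ B`, the radical
satisfies `√(IR ⊕ JR) = √(IR) ⊕ √(JR) = √I·R ⊕ √J·R`. -/
theorem fiberProd_radical_sup_map {k A B : Type*} [Field k] [CommRing A] [CommRing B]
    [Algebra k A] [Algebra k B] [IsNoetherianRing A] [IsNoetherianRing B]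
    (𝒜 : ℕ → Submodule k A) (ℬ : ℕ → Submodule k B)
    [GradedAlgebra 𝒜] [GradedAlgebra ℬ]
    (h𝒜 : 𝒜 0 ≤ LinearMap.range (Algebra.linearMap k A))
    (hℬ : ℬ 0 ≤ LinearMap.range (Algebra.linearMap k B))
    (f : A →ₐ[k] k) (g : B →ₐ[k] k)
    (hf : ∀ i, 0 < i → ∀ a ∈ 𝒜 i, f a = 0)
    (hg : ∀ i, 0 < i → ∀ b ∈ ℬ i, g b = 0)
    (I : Ideal A) (hI : I ≠ ⊤) (hIhom : I.IsHomogeneous 𝒜)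
    (J : Ideal B) (hJ : J ≠ ⊤) (hJhom : J.IsHomogeneous ℬ) :
    (Ideal.map (fiberProdInl f g) I ⊔ Ideal.map (fiberProdInr f g) J).radical
        = (Ideal.map (fiberProdInl f g) I).radical ⊔ (Ideal.map (fiberProdInr f g) J).radical ∧
      (Ideal.map (fiberProdInl f g) I).radical ⊔ (Ideal.map (fiberProdInr f g) J).radical
        = Ideal.map (fiberProdInl f g) I.radical ⊔ Ideal.map (fiberProdInr f g) J.radical ∧
      Ideal.map (fiberProdInl f g) I.radical ⊓ Ideal.map (fiberProdInr f g) J.radical = ⊥ := by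
  
  have kf : ∀ a ∈ I, f a = 0 := key_vanish 𝒜 h𝒜 f hf I hI hIhom
  have kg : ∀ b ∈ J, g b = 0 := key_vanish ℬ hℬ g hg J hJ hJhom
  have hIr : I.radical ≠ ⊤ := fun h => hI (Ideal.radical_eq_top.mp h)
  have hJr : J.radical ≠ ⊤ := fun h => hJ (Ideal.radical_eq_top.mp h)
  have kfr : ∀ a ∈ I.radical, f a = 0 := key_vanish 𝒜 h𝒜 f hf _ hIr hIhom.radical
  have kgr : ∀ b ∈ J.radical, g b = 0 := key_vanish ℬ hℬ g hg _ hJr hJhom.radical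
  have main : (Ideal.map (fiberProdInl f g) I ⊔ Ideal.map (fiberProdInr f g) J).radical
      = Ideal.map (fiberProdInl f g) I.radical ⊔ Ideal.map (fiberProdInr f g) J.radical := by
    ext x
    rw [mem_sup_map f g I.radical J.radical kfr kgr]
    constructor
    · rintro ⟨n, hn⟩
      obtain ⟨h1, h2⟩ := (mem_sup_map f g I J kf kg (x ^ n)).mp hn
      have e1 : ((x ^ n : fiberProd f g) : A × B).1 = (x : A × B).1 ^ n := by
        rw [SubmonoidClass.coe_pow, Prod.pow_fst]
      have e2 : ((x ^ n : fiberProd f g) : A × B).2 = (x : A × B).2 ^ n := by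
        rw [SubmonoidClass.coe_pow, Prod.pow_snd]
      exact ⟨⟨n, e1 ▸ h1⟩, ⟨n, e2 ▸ h2⟩⟩
    · rintro ⟨⟨n, hn⟩, ⟨m, hm⟩⟩
      refine ⟨n + m, (mem_sup_map f g I J kf kg (x ^ (n + m))).mpr ⟨?_, ?_⟩⟩
      · have e1 : ((x ^ (n + m) : fiberProd f g) : A × B).1 = (x : A × B).1 ^ (n + m) := by
          rw [SubmonoidClass.coe_pow, Prod.pow_fst]
        rw [e1, pow_add]
        exact I.mul_mem_right _ hn
      · have e2 : ((x ^ (n + m) : fiberProd f g) : A × B).2 = (x : A × B).2 ^ (n + m) := by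
          rw [SubmonoidClass.coe_pow, Prod.pow_snd]
        rw [e2, pow_add]
        exact J.mul_mem_left _ hm
  have eq1 : (Ideal.map (fiberProdInl f g) I ⊔ Ideal.map (fiberProdInr f g) J).radical
      = (Ideal.map (fiberProdInl f g) I).radical ⊔ (Ideal.map (fiberProdInr f g) J).radical := by
    refine le_antisymm ?_ ?_
    · rw [main]
      exact sup_le_sup (Ideal.map_radical_le _) (Ideal.map_radical_le _)
    · exact sup_le (Ideal.radical_mono le_sup_left) (Ideal.radical_mono le_sup_right)
  refine ⟨eq1, by rw [← eq1, main], ?_⟩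
  rw [eq_bot_iff]
  rintro x ⟨hx1, hx2⟩
  obtain ⟨h1, h2⟩ := (mem_mapInl f g I.radical kfr x).mp hx1
  obtain ⟨h3, h4⟩ := (mem_mapInr f g J.radical kgr x).mp hx2
  have : x = 0 := Subtype.ext (Prod.ext h4 h2)
  rw [Ideal.mem_bot]
  exact this
end
end

section
/- Let R = A ×_k B be the fiber product of positively graded Noetherian k-algebras over a field k, and let M be a graded A-module regarded as an R-module via the projection π_1 : R → A, (a,b) ↦ a. If (α, β) ∈ tr_R(M) is a homogeneous element of the trace ideal, then β annihilates m_B, i.e. β ∈ (0 :_B m_B). -/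
set_option synthInstance.maxHeartbeats 1000000
set_option maxHeartbeats 1000000

noncomputable section

/-- Let `R = A ×ₖ B` be the fiber product of positively graded Noetherian
`k`-algebras over a field `k`, and let `M` be a graded `A`-module regarded as an `R`-module
via the projection `π₁ : R → A`. If `(α, β) ∈ tr_R(M)` is a homogeneous element of the trace
ideal, then `β` annihilates `m_B = ker g`, i.e. `β ∈ (0 :_B m_B)`. -/
theorem fiberProd_trace_snd_mem_annihilator {k A B : Type*} [Field k] [CommRing A] [CommRing B]
    [Algebra k A] [Algebra k B] [IsNoetherianRing A] [IsNoetherianRing B]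
    (𝒜 : ℕ → Submodule k A) (ℬ : ℕ → Submodule k B)
    [GradedAlgebra 𝒜] [GradedAlgebra ℬ]
    (h𝒜 : 𝒜 0 ≤ LinearMap.range (Algebra.linearMap k A))
    (hℬ : ℬ 0 ≤ LinearMap.range (Algebra.linearMap k B))
    (f : A →ₐ[k] k) (g : B →ₐ[k] k)
    (hf : ∀ i, 0 < i → ∀ a ∈ 𝒜 i, f a = 0)
    (hg : ∀ i, 0 < i → ∀ b ∈ ℬ i, g b = 0)
    (M : Type*) [AddCommGroup M] [Module A M]
    -- `M` is graded as an `A`-module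
    (𝓜 : ℕ → AddSubgroup M) [DirectSum.Decomposition 𝓜]
    (hgr : ∀ i j, ∀ a ∈ 𝒜 i, ∀ x ∈ 𝓜 j, a • x ∈ 𝓜 (i + j))
    -- the `R`-module structure on `M` given by restriction of scalars along `π₁`
    [Module (fiberProd f g) M]
    (hcomp : ∀ (r : fiberProd f g) (x : M), r • x = ((r : A × B).1) • x)
    (x : fiberProd f g)
    (hx : x ∈ ⨆ φ : M →ₗ[fiberProd f g] fiberProd f g, LinearMap.range φ)
    (hhom : ∃ n, (x : A × B).1 ∈ 𝒜 n ∧ (x : A × B).2 ∈ ℬ n) :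
    (x : A × B).2 ∈ (RingHom.ker g : Ideal B).annihilator := by
  rw [Submodule.mem_annihilator]
  intro b hb
  -- the element r = (0, b) of the fiber product
  have hmem : ((0 : A), b) ∈ fiberProd f g := by
    simp [fiberProd, AlgHom.mem_equalizer,
      RingHom.mem_ker.mp hb]
  set r : fiberProd f g := ⟨((0 : A), b), hmem⟩ with hr
  -- r annihilates the trace ideal
  have hker : (⨆ φ : M →ₗ[fiberProd f g] fiberProd f g, LinearMap.range φ) ≤
      LinearMap.ker (LinearMap.lsmul (fiberProd f g) (fiberProd f g) r) := by
    refine iSup_le fun φ => ?_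
    rintro _ ⟨m, rfl⟩
    have : r • m = (0 : M) := by
      rw [hcomp]
      simp [hr]
    simp only [LinearMap.mem_ker, LinearMap.lsmul_apply, ← map_smul, this, map_zero]
  have h0 : r • x = 0 := hker hx
  have h0' : (r : A × B) * (x : A × B) = 0 := by
    have := congrArg (Subtype.val) h0
    simpa [smul_eq_mul] using this
  have := congrArg Prod.snd h0'
  simpa [mul_comm, hr] using this
end
end

section
/- Let R = A ×_k B be the fiber product of positively graded Noetherian k-algebras over a field k with B ≠ B_0 (i.e. B is not equal to its degree-zero part), and let M be a graded A-module viewed as an R-module via the projection π_1 : R → A. Then tr_R(M) ≠ R; that is, M has no R-free direct summand. -/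
set_option synthInstance.maxHeartbeats 1000000
set_option maxHeartbeats 1000000

noncomputable section

/-- Let `R = A ×ₖ B` be the fiber product of positively graded Noetherian
`k`-algebras over a field `k` with `B ≠ B₀`, and let `M` be a graded `A`-module viewed as an
`R`-module via the projection `π₁ : R → A`. Then `tr_R(M) ≠ R`; that is, `M` has no `R`-free
direct summand. -/
theorem fiberProd_trace_ne_top {k A B : Type*} [Field k] [CommRing A] [CommRing B]
    [Algebra k A] [Algebra k B] [IsNoetherianRing A] [IsNoetherianRing B]
    (𝒜 : ℕ → Submodule k A) (ℬ : ℕ → Submodule k B)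
    [GradedAlgebra 𝒜] [GradedAlgebra ℬ]
    (h𝒜 : 𝒜 0 ≤ LinearMap.range (Algebra.linearMap k A))
    (hℬ : ℬ 0 ≤ LinearMap.range (Algebra.linearMap k B))
    (f : A →ₐ[k] k) (g : B →ₐ[k] k)
    (hf : ∀ i, 0 < i → ∀ a ∈ 𝒜 i, f a = 0)
    (hg : ∀ i, 0 < i → ∀ b ∈ ℬ i, g b = 0)
    (hB : ∃ i, 0 < i ∧ ℬ i ≠ ⊥)
    (M : Type*) [AddCommGroup M] [Module A M]
    (𝓜 : ℕ → AddSubgroup M) [DirectSum.Decomposition 𝓜]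
    (hgr : ∀ i j, ∀ a ∈ 𝒜 i, ∀ x ∈ 𝓜 j, a • x ∈ 𝓜 (i + j))
    [Module (fiberProd f g) M]
    (hcomp : ∀ (r : fiberProd f g) (x : M), r • x = ((r : A × B).1) • x) :
    (⨆ φ : M →ₗ[fiberProd f g] fiberProd f g, LinearMap.range φ) ≠ ⊤ := by
  intro h
  obtain ⟨i, hi, hBi⟩ := hB
  obtain ⟨b, hb, hb0⟩ := Submodule.exists_mem_ne_zero_of_ne_bot hBi
  have hgb : g b = 0 := hg i hi b hb
  have hmem : ((0 : A), b) ∈ fiberProd f g := by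
    simp [fiberProd, AlgHom.mem_equalizer, hgb]
  set r : fiberProd f g := ⟨((0 : A), b), hmem⟩ with hrdef
  have hr : ∀ y ∈ (⨆ φ : M →ₗ[fiberProd f g] fiberProd f g, LinearMap.range φ),
      r * y = 0 := by
    intro y hy
    refine Submodule.iSup_induction _ (motive := fun y => r * y = 0) hy ?_ (by simp) ?_
    · rintro φ y ⟨x, rfl⟩
      have : r • x = 0 := by rw [hcomp]; simp [hrdef]
      calc r * φ x = φ (r • x) := by rw [← smul_eq_mul, ← map_smul]
        _ = 0 := by rw [this, map_zero]
    · intro y z hy hz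
      rw [mul_add, hy, hz, add_zero]
  have := hr 1 (h ▸ Submodule.mem_top)
  rw [mul_one] at this
  apply hb0
  have : (r : A × B) = 0 := by rw [this]; rfl
  exact congrArg Prod.snd this
end
end

section
/- Let R = A ×_k B be the fiber product of positively graded Noetherian k-algebras over a field k, with B ≠ B_0. Then the trace of A as an R-module (via the projection π_1) equals tr_R(A) = m_A·R ⊕ ((0 :_B m_B))·R. -/
set_option synthInstance.maxHeartbeats 1000000
set_option maxHeartbeats 1000000

noncomputable section


open DirectSum in
lemma ann_le_ker_aux {k B : Type*} [Field k] [CommRing B] [Algebra k B]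
    (ℬ : ℕ → Submodule k B) [GradedAlgebra ℬ]
    (hℬ : ℬ 0 ≤ LinearMap.range (Algebra.linearMap k B))
    (g : B →ₐ[k] k) (hg : ∀ i, 0 < i → ∀ b ∈ ℬ i, g b = 0)
    (hB : ∃ i, 0 < i ∧ ℬ i ≠ ⊥) {b : B}
    (hb : b ∈ (RingHom.ker g : Ideal B).annihilator) : g b = 0 := by
  classical
  obtain ⟨i, hi, hne⟩ := hB
  obtain ⟨c, hc, hc0⟩ := Submodule.exists_mem_ne_zero_of_ne_bot hne
  have hcg : c ∈ RingHom.ker g := by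
    rw [RingHom.mem_ker]; exact hg i hi c hc
  have hbc : b * c = 0 := by
    have := Submodule.mem_annihilator.mp hb c hcg
    simpa [smul_eq_mul] using this
  have h0 : (DirectSum.decompose ℬ b 0 : B) * c = 0 := by
    have h := DirectSum.coe_decompose_mul_of_right_mem_of_le (a := b) ℬ hc (le_refl i)
    rw [hbc, Nat.sub_self] at h
    simpa using h.symm
  obtain ⟨lam, hl⟩ := hℬ (DirectSum.decompose ℬ b 0).2
  have hb0 : (DirectSum.decompose ℬ b 0 : B) = 0 := by
    have hlc : lam • c = 0 := by
      have : algebraMap k B lam * c = 0 := by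
        rw [show (algebraMap k B lam : B) = (DirectSum.decompose ℬ b 0 : B) from hl, h0]
      rwa [Algebra.smul_def]
    rcases eq_or_ne lam 0 with h | h
    · rw [← hl, h]; simp
    · exact absurd (by calc c = lam⁻¹ • (lam • c) := by rw [smul_smul, inv_mul_cancel₀ h, one_smul]
        _ = 0 := by rw [hlc, smul_zero]) hc0
  conv_lhs => rw [← DirectSum.sum_support_decompose ℬ b]
  rw [map_sum]
  apply Finset.sum_eq_zero
  intro j _
  rcases Nat.eq_zero_or_pos j with h | h
  · rw [h, hb0, map_zero]
  · exact hg j h _ (DirectSum.decompose ℬ b j).2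

/-- Let `R = A ×ₖ B` be the fiber product of positively graded Noetherian
`k`-algebras over a field `k`, with `B ≠ B₀`. Then the trace of `A` as an `R`-module (via the
projection `π₁`) equals `tr_R(A) = m_A·R ⊕ (0 :_B m_B)·R`. -/
theorem fiberProd_trace_of_first_factor {k A B : Type*} [Field k] [CommRing A] [CommRing B]
    [Algebra k A] [Algebra k B] [IsNoetherianRing A] [IsNoetherianRing B]
    (𝒜 : ℕ → Submodule k A) (ℬ : ℕ → Submodule k B)
    [GradedAlgebra 𝒜] [GradedAlgebra ℬ]
    (h𝒜 : 𝒜 0 ≤ LinearMap.range (Algebra.linearMap k A))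
    (hℬ : ℬ 0 ≤ LinearMap.range (Algebra.linearMap k B))
    (f : A →ₐ[k] k) (g : B →ₐ[k] k)
    (hf : ∀ i, 0 < i → ∀ a ∈ 𝒜 i, f a = 0)
    (hg : ∀ i, 0 < i → ∀ b ∈ ℬ i, g b = 0)
    (hB : ∃ i, 0 < i ∧ ℬ i ≠ ⊥)
    -- `A` as an `R`-module via `π₁`
    [Module (fiberProd f g) A]
    (hcomp : ∀ (r : fiberProd f g) (x : A), r • x = ((r : A × B).1) * x) :
    (⨆ φ : A →ₗ[fiberProd f g] fiberProd f g, LinearMap.range φ)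
        = Ideal.map (fiberProdInl f g) (RingHom.ker f)
            ⊔ Ideal.map (fiberProdInr f g) ((RingHom.ker g : Ideal B).annihilator) ∧
      Ideal.map (fiberProdInl f g) (RingHom.ker f)
          ⊓ Ideal.map (fiberProdInr f g) ((RingHom.ker g : Ideal B).annihilator) = ⊥ := by
  classical
  have hmem : ∀ r : fiberProd f g, f (r : A × B).1 = g (r : A × B).2 := fun r => r.2
  have hmem' : ∀ p : A × B, f p.1 = g p.2 → p ∈ fiberProd f g := fun p hp => hp
  have hinl : ∀ a : A, ((fiberProdInl f g a : A × B)) = (a, algebraMap k B (f a)) :=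
    fun a => rfl
  have hinr : ∀ b : B, ((fiberProdInr f g b : A × B)) = (algebraMap k A (g b), b) :=
    fun b => rfl
  have hann : ∀ b ∈ (RingHom.ker g : Ideal B).annihilator, g b = 0 :=
    fun b hb => ann_le_ker_aux ℬ hℬ g hg hB hb
  -- membership characterizations
  have hI1 : ∀ r : fiberProd f g,
      r ∈ Ideal.map (fiberProdInl f g) (RingHom.ker f) ↔ (r : A × B).2 = 0 := by
    have e1 : Ideal.map (fiberProdInl f g) (RingHom.ker f)
        = RingHom.ker ((AlgHom.snd k A B).comp (fiberProd f g).val) := by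
      apply le_antisymm
      · rw [Ideal.map_le_iff_le_comap]
        intro a ha
        rw [RingHom.mem_ker] at ha
        rw [Ideal.mem_comap, RingHom.mem_ker]
        show ((fiberProdInl f g a : A × B)).2 = 0
        rw [hinl, ha, map_zero]
      · intro r hr
        have h2 : (r : A × B).2 = 0 := RingHom.mem_ker.mp hr
        have hf1 : (r : A × B).1 ∈ RingHom.ker f := by
          rw [RingHom.mem_ker]
          have := hmem r
          rw [h2, map_zero] at this
          exact this
        have heq : fiberProdInl f g (r : A × B).1 = r := by
          apply Subtype.ext
          rw [hinl]
          exact Prod.ext rfl (by rw [RingHom.mem_ker.mp hf1, map_zero, h2])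
        rw [← heq]
        exact Ideal.mem_map_of_mem _ hf1
    intro r
    rw [e1, RingHom.mem_ker]
    exact Iff.rfl
  have hI2 : ∀ r : fiberProd f g,
      r ∈ Ideal.map (fiberProdInr f g) ((RingHom.ker g : Ideal B).annihilator)
      ↔ (r : A × B).1 = 0 ∧ (r : A × B).2 ∈ (RingHom.ker g : Ideal B).annihilator := by
    have e2 : Ideal.map (fiberProdInr f g) ((RingHom.ker g : Ideal B).annihilator)
        = RingHom.ker ((AlgHom.fst k A B).comp (fiberProd f g).val)
          ⊓ Ideal.comap ((AlgHom.snd k A B).comp (fiberProd f g).val)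
              ((RingHom.ker g : Ideal B).annihilator) := by
      apply le_antisymm
      · rw [Ideal.map_le_iff_le_comap]
        intro b hb
        rw [Ideal.mem_comap, Submodule.mem_inf]
        constructor
        · rw [RingHom.mem_ker]
          show ((fiberProdInr f g b : A × B)).1 = 0
          rw [hinr, hann b hb, map_zero]
        · rw [Ideal.mem_comap]
          show ((fiberProdInr f g b : A × B)).2 ∈ _
          rw [hinr]
          exact hb
      · rintro r hr
        rw [Submodule.mem_inf] at hr
        obtain ⟨h1, h2⟩ := hr
        have h1' : (r : A × B).1 = 0 := RingHom.mem_ker.mp h1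
        have h2' : (r : A × B).2 ∈ (RingHom.ker g : Ideal B).annihilator :=
          Ideal.mem_comap.mp h2
        have heq : fiberProdInr f g (r : A × B).2 = r := by
          apply Subtype.ext
          rw [hinr]
          exact Prod.ext (by rw [hann _ h2', map_zero, h1']) rfl
        rw [← heq]
        exact Ideal.mem_map_of_mem _ h2'
    intro r
    rw [e2, Submodule.mem_inf, RingHom.mem_ker, Ideal.mem_comap]
    exact Iff.rfl
  constructor
  · apply le_antisymm
    · apply iSup_le
      intro φ
      rintro r ⟨x, rfl⟩
      set r := φ x with hrx
      have hb : (r : A × B).2 ∈ (RingHom.ker g : Ideal B).annihilator := by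
        rw [Submodule.mem_annihilator]
        intro c hcmem
        have hgc : g c = 0 := RingHom.mem_ker.mp hcmem
        have h0 : (fiberProdInr f g c) • x = (0 : A) := by
          rw [hcomp, hinr, hgc, map_zero, zero_mul]
        have hsm := φ.map_smul (fiberProdInr f g c) x
        rw [h0, map_zero] at hsm
        have h2 := congrArg (fun s : fiberProd f g => (s : A × B).2) hsm
        simp only [smul_eq_mul] at h2
        have h3 : (0 : B) = ((fiberProdInr f g c : A × B).2) * (r : A × B).2 := by
          simpa using h2
        rw [hinr] at h3
        simp only [smul_eq_mul]
        rw [mul_comm]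
        exact h3.symm
      have hfa : f (r : A × B).1 = 0 := by rw [hmem r]; exact hann _ hb
      rw [Submodule.mem_sup]
      refine ⟨⟨((r : A × B).1, 0), hmem' _ (by rw [hfa, map_zero])⟩, ?_,
        ⟨(0, (r : A × B).2), hmem' _ (by rw [map_zero, hann _ hb])⟩, ?_, ?_⟩
      · rw [hI1]
      · rw [hI2]
        exact ⟨rfl, hb⟩
      · apply Subtype.ext
        show ((r : A × B).1, (0 : B)) + ((0 : A), (r : A × B).2) = (r : A × B)
        rw [Prod.mk_add_mk, add_zero, zero_add]
    · apply sup_le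
      · intro r hr
        rw [hI1] at hr
        have hfr : f (r : A × B).1 = 0 := by
          have := hmem r
          rw [hr, map_zero] at this; exact this
        let φ : A →ₗ[fiberProd f g] fiberProd f g :=
          { toFun := fun x => ⟨((r : A × B).1 * x, 0),
              hmem' _ (by rw [map_mul, hfr, zero_mul, map_zero])⟩
            map_add' := fun x y => by
              apply Subtype.ext
              show ((r : A × B).1 * (x + y), (0 : B)) = _
              simp [mul_add, Prod.ext_iff]
            map_smul' := fun s x => by
              apply Subtype.ext
              show ((r : A × B).1 * (s • x), (0 : B))
                  = ((s : A × B) * ((r : A × B).1 * x, 0) : A × B)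
              rw [hcomp]
              apply Prod.ext
              · show (r : A × B).1 * ((s : A × B).1 * x) = (s : A × B).1 * ((r : A × B).1 * x)
                ring
              · show (0 : B) = (s : A × B).2 * 0
                rw [mul_zero] }
        have hmemr : r ∈ LinearMap.range φ := by
          refine ⟨1, ?_⟩
          apply Subtype.ext
          show ((r : A × B).1 * 1, (0 : B)) = (r : A × B)
          rw [mul_one, ← hr]
        exact le_iSup (fun ψ : A →ₗ[fiberProd f g] fiberProd f g => LinearMap.range ψ) φ hmemr
      · intro r hr
        rw [hI2] at hr
        obtain ⟨h1, h2⟩ := hr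
        have hgb : g (r : A × B).2 = 0 := hann _ h2
        have key : ∀ s : fiberProd f g,
            (s : A × B).2 * (r : A × B).2 = f (s : A × B).1 • (r : A × B).2 := by
          intro s
          have hker : (s : A × B).2 - algebraMap k B (g (s : A × B).2) ∈ RingHom.ker g := by
            rw [RingHom.mem_ker, map_sub, AlgHom.commutes, Algebra.algebraMap_self, RingHom.id_apply, sub_self]
          have hz : (r : A × B).2 * ((s : A × B).2 - algebraMap k B (g (s : A × B).2)) = 0 := by
            have := Submodule.mem_annihilator.mp h2 _ hker
            simpa [smul_eq_mul] using this
          rw [mul_sub] at hz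
          have h3 := sub_eq_zero.mp hz
          calc (s : A × B).2 * (r : A × B).2
              = (r : A × B).2 * (s : A × B).2 := mul_comm _ _
            _ = (r : A × B).2 * algebraMap k B (g (s : A × B).2) := h3
            _ = (r : A × B).2 * algebraMap k B (f (s : A × B).1) := by rw [hmem s]
            _ = f (s : A × B).1 • (r : A × B).2 := by rw [Algebra.smul_def, mul_comm]
        let ψ : A →ₗ[fiberProd f g] fiberProd f g :=
          { toFun := fun x => ⟨(0, f x • (r : A × B).2),
              hmem' _ (by rw [map_zero, Algebra.smul_def, map_mul, hgb, mul_zero])⟩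
            map_add' := fun x y => by
              apply Subtype.ext
              show ((0 : A), f (x + y) • (r : A × B).2) = _
              simp [map_add, add_smul, Prod.ext_iff]
            map_smul' := fun s x => by
              apply Subtype.ext
              show ((0 : A), f (s • x) • (r : A × B).2)
                  = ((s : A × B) * (0, f x • (r : A × B).2) : A × B)
              rw [hcomp]
              apply Prod.ext
              · show (0 : A) = (s : A × B).1 * 0
                rw [mul_zero]
              · show f ((s : A × B).1 * x) • (r : A × B).2
                    = (s : A × B).2 * (f x • (r : A × B).2)
                rw [map_mul, mul_smul_comm, key s, mul_comm (f (s : A × B).1) (f x),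
                  mul_smul] }
        have hmemr : r ∈ LinearMap.range ψ := by
          refine ⟨1, ?_⟩
          apply Subtype.ext
          show ((0 : A), f 1 • (r : A × B).2) = (r : A × B)
          rw [map_one, one_smul, ← h1]
        exact le_iSup (fun ψ : A →ₗ[fiberProd f g] fiberProd f g => LinearMap.range ψ) ψ hmemr
  · rw [eq_bot_iff]
    intro r hr
    rw [Submodule.mem_inf, hI1, hI2] at hr
    obtain ⟨h2, h1, _⟩ := hr
    show r = 0
    apply Subtype.ext
    exact Prod.ext h1 h2
end
end
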